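/- There exist weight matrices A^{(1)}, A^{(2)} (taken in a limiting/saturated-softmax sense) such that for every n×n permutation matrix P and every target Y ∈ ℝ^{n×n}, the two-layer disentangled transformer WITHOUT causal masking, given input X = [P; P·Y] with identity positional encodings, outputs Y exactly in a fixed n×n block of its final residual stream. -/

import Mathlib

open Matrix Filter

noncomputable def permMatrix {n : ℕ} (π : Equiv.Perm (Fin n)) : Matrix (Fin n) (Fin n) ℝ :=
  Matrix.of fun i j => if π i = j then (1 : ℝ) else 0

/-- Causal-mask-free softmax attention. -/
noncomputable def cmfAttn {T m : ℕ} (A : Matrix (Fin m) (Fin m) ℝ)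
    (h : Matrix (Fin T) (Fin m) ℝ) : Matrix (Fin T) (Fin m) ℝ :=
  Matrix.of fun i k =>
    (∑ j : Fin T, Real.exp ((h * A * hᵀ) i j) * h j k) /
    (∑ j : Fin T, Real.exp ((h * A * hᵀ) i j))

def stack {n : ℕ} (P Q : Matrix (Fin n) (Fin n) ℝ) : Matrix (Fin (n + n)) (Fin n) ℝ :=
  Matrix.of fun i => Fin.addCases (motive := fun _ => Fin n → ℝ) (fun i₁ => P i₁) (fun i₂ => Q i₂) i

/-- Embedding `[X, I_{2n}]` with one-hot positional encodings. -/
def embed {n : ℕ} (X : Matrix (Fin (n + n)) (Fin n) ℝ) :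
    Matrix (Fin (n + n)) (Fin (n + (n + n))) ℝ :=
  Matrix.of fun i =>
    Fin.append (X i) (fun j : Fin (n + n) => if i = j then (1 : ℝ) else 0)

/-- One disentangled causal-mask-free layer: concatenate the input with the attention output. -/
noncomputable def layerCMF {T m : ℕ} (A : Matrix (Fin m) (Fin m) ℝ)
    (h : Matrix (Fin T) (Fin m) ℝ) : Matrix (Fin T) (Fin (m + m)) ℝ :=
  Matrix.of fun i => Fin.append (h i) (cmfAttn A h i)

def B1mat (n : ℕ) : Matrix (Fin (n + (n + n))) (Fin (n + (n + n))) ℝ :=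
  Matrix.of fun u v => if n ≤ u.val ∧ v.val = n + (u.val - n) % n then 1 else 0

def B2mat (n : ℕ) : Matrix (Fin ((n + (n + n)) + (n + (n + n)))) (Fin ((n + (n + n)) + (n + (n + n)))) ℝ :=
  Matrix.of fun u v => if n ≤ u.val ∧ u.val < n + n ∧
      (v.val = (n + (n + n)) + (u.val - n) ∨ (n + n ≤ v.val ∧ v.val < n + (n + n))) then 1 else 0

lemma embed_left {n : ℕ} (X : Matrix (Fin (n + n)) (Fin n) ℝ) (i : Fin (n + n)) (p : Fin n) :
    embed X i (Fin.castAdd (n + n) p) = X i p := by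
  simp [embed, Fin.append_left]

lemma embed_right {n : ℕ} (X : Matrix (Fin (n + n)) (Fin n) ℝ) (i q : Fin (n + n)) :
    embed X i (Fin.natAdd n q) = if i = q then 1 else 0 := by
  simp [embed, Fin.append_right]

lemma score1 {n : ℕ} (X : Matrix (Fin (n + n)) (Fin n) ℝ) (i j : Fin (n + n)) :
    (embed X * B1mat n * (embed X)ᵀ) i j = if j.val = i.val % n then 1 else 0 := by
  have hn : 0 < n := by have := i.isLt; omega
  rw [Matrix.mul_apply]
  simp only [Matrix.transpose_apply, Matrix.mul_apply, Finset.sum_mul]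
  rw [Finset.sum_comm]
  -- now : ∑ v, ∑ u, embed X i v * B1 v u * embed X j u
  rw [Fin.sum_univ_add]
  have hzero : ∀ p : Fin n, (∑ u, embed X i (Fin.castAdd (n+n) p) * B1mat n (Fin.castAdd (n+n) p) u
      * embed X j u) = 0 := by
    intro p
    refine Finset.sum_eq_zero fun u _ => ?_
    have : B1mat n (Fin.castAdd (n+n) p) u = 0 := by
      simp only [B1mat, Matrix.of_apply, Fin.coe_castAdd, ite_eq_right_iff]
      intro hcond
      exact absurd hcond.1 (by omega)
    rw [this, mul_zero, zero_mul]
  rw [Finset.sum_congr rfl (fun p _ => hzero p), Finset.sum_const_zero, zero_add]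
  -- second part: ∑ q : Fin (n+n), ∑ u, embed X i (natAdd q) * B1 (natAdd q) u * embed X j u
  rw [Finset.sum_congr rfl (fun q (_ : q ∈ Finset.univ) => by
    rw [Finset.sum_congr rfl (fun u (_ : u ∈ Finset.univ) => by
      rw [embed_right, ite_mul, ite_mul, one_mul, zero_mul, zero_mul])])]
  simp only [Finset.sum_ite_irrel, Finset.sum_const_zero]
  rw [Finset.sum_ite_eq Finset.univ i (fun q => ∑ u, B1mat n (Fin.natAdd n q) u * embed X j u),
    if_pos (Finset.mem_univ i)]
  -- now: ∑ u, B1mat n (natAdd n i) u * embed X j u = indicator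
  rw [Fin.sum_univ_add]
  have h1 : ∀ p : Fin n, B1mat n (Fin.natAdd n i) (Fin.castAdd (n+n) p) * embed X j (Fin.castAdd (n+n) p) = 0 := by
    intro p
    have : B1mat n (Fin.natAdd n i) (Fin.castAdd (n+n) p) = 0 := by
      simp only [B1mat, Matrix.of_apply, Fin.coe_natAdd, Fin.coe_castAdd, ite_eq_right_iff]
      intro hcond
      have := p.isLt
      omega
    rw [this, zero_mul]
  rw [Finset.sum_congr rfl (fun p _ => h1 p), Finset.sum_const_zero, zero_add]
  have him : i.val % n < n + n := by have := Nat.mod_lt i.val hn; omega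
  have h2 : ∀ q : Fin (n+n), B1mat n (Fin.natAdd n i) (Fin.natAdd n q) * embed X j (Fin.natAdd n q)
      = if q = (⟨i.val % n, him⟩ : Fin (n+n)) then (if j = q then 1 else 0) else 0 := by
    intro q
    rw [embed_right]
    simp only [B1mat, Matrix.of_apply, Fin.coe_natAdd]
    have : (n ≤ n + i.val ∧ n + q.val = n + (n + i.val - n) % n) ↔ q = ⟨i.val % n, him⟩ := by
      rw [Fin.ext_iff]
      simp only [Fin.val_mk, Nat.add_sub_cancel_left]
      omega
    rw [if_congr this rfl rfl, ite_mul, one_mul, zero_mul]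
  rw [Finset.sum_congr rfl (fun q _ => h2 q)]
  rw [Finset.sum_ite_eq' Finset.univ (⟨i.val % n, him⟩ : Fin (n+n)) (fun q => if j = q then 1 else 0),
    if_pos (Finset.mem_univ _)]
  simp [Fin.ext_iff, eq_comm]

lemma softmax_limit {T : ℕ} (g : Fin T → ℝ → ℝ) (G : Fin T → ℝ) (x : Fin T → ℝ) (j0 : Fin T)
    (hg : ∀ j, Tendsto (g j) atTop (nhds (G j))) (hmax : ∀ j, j ≠ j0 → G j < G j0) :
    Tendsto (fun β => (∑ j, Real.exp (β * g j β) * x j) / (∑ j, Real.exp (β * g j β)))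
      atTop (nhds (x j0)) := by
  set w : Fin T → ℝ → ℝ := fun j β => Real.exp (β * (g j β - g j0 β)) with hw
  have hwlim : ∀ j, Tendsto (w j) atTop (nhds (if j = j0 then 1 else 0)) := by
    intro j
    by_cases hj : j = j0
    · subst hj
      simp [hw]
    · simp only [hw, if_neg hj]
      have h1 : Tendsto (fun β => g j β - g j0 β) atTop (nhds (G j - G j0)) :=
        (hg j).sub (hg j0)
      have h2 : Tendsto (fun β : ℝ => β * (g j β - g j0 β)) atTop atBot :=
        Tendsto.atTop_mul_neg (by linarith [hmax j hj]) tendsto_id h1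
      exact Real.tendsto_exp_atBot.comp h2
  have hnum : Tendsto (fun β => ∑ j, w j β * x j) atTop (nhds (x j0)) := by
    have := tendsto_finset_sum (f := fun j β => w j β * x j) (x := atTop)
      (a := fun j => (if j = j0 then 1 else 0) * x j) Finset.univ
      (fun j _ => (hwlim j).mul_const (x j))
    simpa [ite_mul, Finset.sum_ite_eq'] using this
  have hden : Tendsto (fun β => ∑ j, w j β) atTop (nhds 1) := by
    have := tendsto_finset_sum (f := fun j β => w j β) (x := atTop)
      (a := fun j => (if j = j0 then 1 else 0)) Finset.univ (fun j _ => hwlim j)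
    simpa [Finset.sum_ite_eq'] using this
  have key := hnum.div hden one_ne_zero
  rw [div_one] at key
  refine key.congr fun β => ?_
  have hE : Real.exp (β * g j0 β) ≠ 0 := (Real.exp_pos _).ne'
  rw [← div_div_div_cancel_right₀ hE (∑ j, Real.exp (β * g j β) * x j) (∑ j, Real.exp (β * g j β))]
  have e1 : (∑ j, Real.exp (β * g j β) * x j) / Real.exp (β * g j0 β) = ∑ j, w j β * x j := by
    rw [Finset.sum_div]
    refine Finset.sum_congr rfl fun j _ => ?_
    show _ = Real.exp (β * (g j β - g j0 β)) * x j
    rw [mul_sub, Real.exp_sub]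
    ring
  have e2 : (∑ j, Real.exp (β * g j β)) / Real.exp (β * g j0 β) = ∑ j, w j β := by
    rw [Finset.sum_div]
    refine Finset.sum_congr rfl fun j _ => ?_
    show _ = Real.exp (β * (g j β - g j0 β))
    rw [mul_sub, Real.exp_sub]
  rw [e1, e2]
  rfl



lemma layer_left {T m : ℕ} (A : Matrix (Fin m) (Fin m) ℝ) (h : Matrix (Fin T) (Fin m) ℝ)
    (i : Fin T) (p : Fin m) : layerCMF A h i (Fin.castAdd m p) = h i p :=
  Fin.append_left _ _ _

lemma layer_right {T m : ℕ} (A : Matrix (Fin m) (Fin m) ℝ) (h : Matrix (Fin T) (Fin m) ℝ)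
    (i : Fin T) (p : Fin m) : layerCMF A h i (Fin.natAdd m p) = cmfAttn A h i p :=
  Fin.append_right _ _ _

lemma attn1_formula {n : ℕ} (X : Matrix (Fin (n + n)) (Fin n) ℝ) (β : ℝ) (j : Fin (n + n))
    (k : Fin (n + (n + n))) :
    cmfAttn (β • B1mat n) (embed X) j k =
      (∑ t : Fin (n + n), Real.exp (β * (if t.val = j.val % n then 1 else 0)) * embed X t k) /
      (∑ t : Fin (n + n), Real.exp (β * (if t.val = j.val % n then 1 else 0))) := by
  have hS : embed X * (β • B1mat n) * (embed X)ᵀ = β • (embed X * B1mat n * (embed X)ᵀ) := by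
    rw [Matrix.mul_smul, Matrix.smul_mul]
  simp only [cmfAttn, Matrix.of_apply, hS, Matrix.smul_apply, smul_eq_mul, score1]

lemma attn1_tendsto {n : ℕ} (X : Matrix (Fin (n + n)) (Fin n) ℝ) (j : Fin (n + n))
    (k : Fin (n + (n + n))) :
    Tendsto (fun β : ℝ => cmfAttn (β • B1mat n) (embed X) j k) atTop
      (nhds (embed X ⟨j.val % n, by
        have := j.isLt
        have := Nat.mod_lt j.val (show 0 < n by omega); omega⟩ k)) := by
  have hn : 0 < n := by have := j.isLt; omega
  have him : j.val % n < n + n := by have := Nat.mod_lt j.val hn; omega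
  have main := softmax_limit (fun t _ => if t.val = j.val % n then (1:ℝ) else 0)
    (fun t => if t.val = j.val % n then (1:ℝ) else 0) (fun t => embed X t k)
    ⟨j.val % n, him⟩ (fun t => tendsto_const_nhds) ?_
  · exact Tendsto.congr (fun β => (attn1_formula X β j k).symm) main
  · intro t ht
    have hv : t.val ≠ j.val % n := fun hv => ht (Fin.ext hv)
    simp [hv]

lemma score2 {n : ℕ} (X : Matrix (Fin (n + n)) (Fin n) ℝ)
    (A : Matrix (Fin (n + (n + n))) (Fin (n + (n + n))) ℝ) (i j : Fin (n + n)) (hi : i.val < n) :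
    (layerCMF A (embed X) * B2mat n * (layerCMF A (embed X))ᵀ) i j =
      cmfAttn A (embed X) j ⟨i.val, by omega⟩ + (if n ≤ j.val then 1 else 0) := by
  have hii : i.val < n + n := by omega
  set v0 : Fin ((n + (n + n)) + (n + (n + n))) :=
    Fin.castAdd (n + (n + n)) (Fin.natAdd n ⟨i.val, hii⟩) with hv0
  have hv0v : v0.val = n + i.val := rfl
  rw [Matrix.mul_apply]
  simp only [Matrix.transpose_apply, Matrix.mul_apply, Finset.sum_mul]
  rw [Finset.sum_comm]
  rw [Finset.sum_eq_single v0 ?hother ?hnot]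
  case hnot => exact fun hv => absurd (Finset.mem_univ v0) hv
  case hother =>
    intro v _ hv
    refine Finset.sum_eq_zero fun u _ => ?_
    by_cases hvr : n ≤ v.val ∧ v.val < n + n
    · have hveq : v = Fin.castAdd (n + (n + n)) (Fin.natAdd n ⟨v.val - n, by omega⟩) := by
        apply Fin.ext
        simp only [Fin.coe_castAdd, Fin.coe_natAdd, Fin.val_mk]
        omega
      rw [hveq, layer_left, embed_right, if_neg, zero_mul, zero_mul]
      intro hiq
      apply hv
      apply Fin.ext
      have := congrArg Fin.val hiq
      simp only [Fin.val_mk] at this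
      rw [hv0v]
      omega
    · have hB : B2mat n v u = 0 := by
        simp only [B2mat, Matrix.of_apply, ite_eq_right_iff]
        intro hc
        exact absurd ⟨hc.1, hc.2.1⟩ hvr
      rw [hB, mul_zero, zero_mul]
  -- now the single row v0
  rw [hv0, layer_left, embed_right, if_pos (Fin.ext rfl : i = ⟨i.val, hii⟩)]
  simp only [one_mul, ← hv0]
  rw [Fin.sum_univ_add]
  -- castAdd part
  have hB2c : ∀ s : Fin (n + (n + n)),
      B2mat n v0 (Fin.castAdd (n + (n + n)) s) = if n + n ≤ s.val then 1 else 0 := by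
    intro s
    simp only [B2mat, Matrix.of_apply, Fin.coe_castAdd, hv0v]
    have hs := s.isLt
    refine if_congr ?_ rfl rfl
    omega
  have hB2n : ∀ s : Fin (n + (n + n)),
      B2mat n v0 (Fin.natAdd (n + (n + n)) s)
        = if s = (⟨i.val, by omega⟩ : Fin (n + (n + n))) then 1 else 0 := by
    intro s
    simp only [B2mat, Matrix.of_apply, Fin.coe_natAdd, hv0v]
    refine if_congr ?_ rfl rfl
    rw [Fin.ext_iff]
    simp only [Fin.val_mk]
    have hs := s.isLt
    omega
  simp only [hB2c, hB2n, layer_left, layer_right]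
  rw [Fin.sum_univ_add]
  have hzc1 : ∀ s1 : Fin n,
      (if n + n ≤ (Fin.castAdd (n + n) s1).val then (1:ℝ) else 0) * embed X j (Fin.castAdd (n + n) s1) = 0 := by
    intro s1
    rw [if_neg (by have := s1.isLt; simp only [Fin.coe_castAdd]; omega), zero_mul]
  rw [Finset.sum_congr rfl (fun s1 _ => hzc1 s1), Finset.sum_const_zero, zero_add]
  have hcq : ∀ q : Fin (n + n),
      (if n + n ≤ (Fin.natAdd n q).val then (1:ℝ) else 0) * embed X j (Fin.natAdd n q)
        = if j = q then (if n ≤ q.val then 1 else 0) else 0 := by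
    intro q
    rw [embed_right]
    simp only [Fin.coe_natAdd]
    have hc : (n + n ≤ n + q.val) ↔ (n ≤ q.val) := by omega
    rw [if_congr hc rfl rfl]
    by_cases hj : j = q <;> by_cases hq : n ≤ q.val <;> simp [hj, hq]
  rw [Finset.sum_congr rfl (fun q _ => hcq q),
    Finset.sum_ite_eq Finset.univ j (fun q => if n ≤ q.val then (1:ℝ) else 0),
    if_pos (Finset.mem_univ j)]
  simp only [ite_mul, one_mul, zero_mul]
  rw [Finset.sum_ite_eq' Finset.univ (⟨i.val, by omega⟩ : Fin (n + (n + n)))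
      (fun s => cmfAttn A (embed X) j s),
    if_pos (Finset.mem_univ _)]
  rw [add_comm]

lemma stack_left {n : ℕ} (P Q : Matrix (Fin n) (Fin n) ℝ) (i : Fin n) :
    stack P Q (Fin.castAdd n i) = P i := by
  show Fin.addCases (motive := fun _ => Fin n → ℝ) (fun i₁ => P i₁) (fun i₂ => Q i₂)
    (Fin.castAdd n i) = P i
  exact Fin.addCases_left i

lemma stack_right {n : ℕ} (P Q : Matrix (Fin n) (Fin n) ℝ) (i : Fin n) :
    stack P Q (Fin.natAdd n i) = Q i := by
  show Fin.addCases (motive := fun _ => Fin n → ℝ) (fun i₁ => P i₁) (fun i₂ => Q i₂)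
    (Fin.natAdd n i) = Q i
  exact Fin.addCases_right i

/-- There exist weight matrices (in the saturated-softmax limit `A⁽ⁱ⁾ = β·B⁽ⁱ⁾`, `β → ∞`)
such that for every permutation matrix `P` and target `Y`, the two-layer disentangled
transformer WITHOUT causal masking on input `[P; P·Y]` with identity positional encodings
outputs `Y` exactly in a fixed `n × n` block of its final residual stream. -/
theorem stmt10 {n : ℕ} :
    ∃ (B1 : Matrix (Fin (n + (n + n))) (Fin (n + (n + n))) ℝ)
      (B2 : Matrix (Fin ((n + (n + n)) + (n + (n + n)))) (Fin ((n + (n + n)) + (n + (n + n)))) ℝ)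
      (r c : ℕ) (hr : r + n ≤ n + n)
      (hc : c + n ≤ ((n + (n + n)) + (n + (n + n))) + ((n + (n + n)) + (n + (n + n)))),
      ∀ (π : Equiv.Perm (Fin n)) (Y : Matrix (Fin n) (Fin n) ℝ) (a b : Fin n),
        Tendsto
          (fun β : ℝ =>
            layerCMF (β • B2) (layerCMF (β • B1) (embed (stack (permMatrix π) (permMatrix π * Y))))
              ⟨r + a.val, by have := a.isLt; omega⟩
              ⟨c + b.val, by have := b.isLt; omega⟩)
          atTop (nhds (Y a b)) := by
  
  refine ⟨B1mat n, B2mat n, 0, (n + (n + n)) + (n + (n + n)), by omega, by omega, ?_⟩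
  intro π Y a b
  have hn : 0 < n := a.pos
  set P := permMatrix π with hP
  set X := stack P (P * Y) with hX
  have hm : 0 + (a : ℕ) < n + (n + n) := by have := a.isLt; omega
  have ha2 : 0 + (a : ℕ) < n + n := by have := a.isLt; omega
  have hj0 : n + ((π⁻¹ a : Fin n) : ℕ) < n + n := by have := (π⁻¹ a).isLt; omega
  have hb2 : (b : ℕ) < (n + (n + n)) + (n + (n + n)) := by have := b.isLt; omega
  have key := softmax_limit
    (fun t β => cmfAttn (β • B1mat n) (embed X) t ⟨0 + (a : ℕ), hm⟩ +
      (if n ≤ (t : ℕ) then 1 else 0))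
    (fun t => (if π ⟨(t : ℕ) % n, Nat.mod_lt _ hn⟩ = a then (1 : ℝ) else 0) +
      (if n ≤ (t : ℕ) then 1 else 0))
    (fun t => X t b) ⟨n + ((π⁻¹ a : Fin n) : ℕ), hj0⟩ ?hg ?hmax
  case hg =>
    intro t
    have h1 := attn1_tendsto X t ⟨0 + (a : ℕ), hm⟩
    have hval : ∀ hh : (t : ℕ) % n < n + n,
        embed X ⟨(t : ℕ) % n, hh⟩ ⟨0 + (a : ℕ), hm⟩ =
          (if π ⟨(t : ℕ) % n, Nat.mod_lt _ hn⟩ = a then (1 : ℝ) else 0) := by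
      intro hh
      rw [show (⟨(t : ℕ) % n, hh⟩ : Fin (n + n)) =
            Fin.castAdd n ⟨(t : ℕ) % n, Nat.mod_lt _ hn⟩ from rfl,
          show (⟨0 + (a : ℕ), hm⟩ : Fin (n + (n + n))) =
            Fin.castAdd (n + n) ⟨0 + (a : ℕ), by omega⟩ from rfl,
          embed_left, hX, stack_left, hP]
      have hae : (⟨0 + (a : ℕ), show 0 + (a : ℕ) < n by omega⟩ : Fin n) = a :=
        Fin.ext (by simp)
      simp only [permMatrix, Matrix.of_apply, hae]
    refine Tendsto.add ?_ tendsto_const_nhds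
    rw [← hval (by have := Nat.mod_lt (t : ℕ) hn; omega)]
    exact h1
  case hmax =>
    intro t ht
    simp only
    have hmod0 : (n + ((π⁻¹ a : Fin n) : ℕ)) % n = ((π⁻¹ a : Fin n) : ℕ) := by
      rw [Nat.add_mod_left]; exact Nat.mod_eq_of_lt (π⁻¹ a).isLt
    have e0 : (⟨(n + ((π⁻¹ a : Fin n) : ℕ)) % n, Nat.mod_lt _ hn⟩ : Fin n) = π⁻¹ a :=
      Fin.ext hmod0
    rw [e0]
    rw [if_pos (by exact Equiv.apply_symm_apply π a : π (π⁻¹ a) = a), if_pos (by omega : n ≤ n + ((π⁻¹ a : Fin n) : ℕ))]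
    by_cases htn : n ≤ (t : ℕ)
    · have htm : (t : ℕ) % n = (t : ℕ) - n := by
        conv_lhs => rw [show (t : ℕ) = n + ((t : ℕ) - n) by omega]
        rw [Nat.add_mod_left]
        exact Nat.mod_eq_of_lt (by have := t.isLt; omega)
      have hne : ¬ π ⟨(t : ℕ) % n, Nat.mod_lt _ hn⟩ = a := by
        intro heq
        apply ht
        have : (π⁻¹ a : Fin n) = ⟨(t : ℕ) % n, Nat.mod_lt _ hn⟩ := by
          rw [← heq, Equiv.Perm.inv_def, Equiv.symm_apply_apply]
        apply Fin.ext
        have hv := congrArg Fin.val this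
        simp only [Fin.val_mk] at hv
        simp only [Fin.val_mk]
        omega
      rw [if_neg hne, if_pos htn]
      norm_num
    · rw [if_neg htn]
      have : (if π ⟨(t : ℕ) % n, Nat.mod_lt _ hn⟩ = a then (1 : ℝ) else 0) ≤ 1 := by
        split_ifs <;> norm_num
      linarith
  -- final value
  have hxj0 : X ⟨n + ((π⁻¹ a : Fin n) : ℕ), hj0⟩ b = Y a b := by
    rw [hX, show (⟨n + ((π⁻¹ a : Fin n) : ℕ), hj0⟩ : Fin (n + n)) =
          Fin.natAdd n (π⁻¹ a) from rfl, stack_right, Matrix.mul_apply, hP]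
    simp only [permMatrix, Matrix.of_apply, Equiv.Perm.inv_def, Equiv.apply_symm_apply, ite_mul, one_mul, zero_mul]
    rw [Finset.sum_ite_eq Finset.univ a (fun x => Y x b), if_pos (Finset.mem_univ a)]
  rw [hxj0] at key
  refine key.congr fun β => ?_
  have hSm : layerCMF (β • B1mat n) (embed X) * (β • B2mat n) *
      (layerCMF (β • B1mat n) (embed X))ᵀ =
      β • (layerCMF (β • B1mat n) (embed X) * B2mat n * (layerCMF (β • B1mat n) (embed X))ᵀ) := by
    rw [Matrix.mul_smul, Matrix.smul_mul]
  have hsc : ∀ t, (layerCMF (β • B1mat n) (embed X) * B2mat n *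
      (layerCMF (β • B1mat n) (embed X))ᵀ) ⟨0 + (a : ℕ), ha2⟩ t =
      cmfAttn (β • B1mat n) (embed X) t ⟨0 + (a : ℕ), hm⟩ + (if n ≤ (t : ℕ) then 1 else 0) :=
    fun t => score2 X _ _ t (show 0 + (a : ℕ) < n by omega)
  have hent : ∀ t, layerCMF (β • B1mat n) (embed X) t
      (⟨(b : ℕ), hb2⟩ : Fin ((n + (n + n)) + (n + (n + n)))) = X t b := by
    intro t
    rw [show (⟨(b : ℕ), hb2⟩ : Fin ((n + (n + n)) + (n + (n + n)))) =
          Fin.castAdd (n + (n + n)) ⟨(b : ℕ), by have := b.isLt; omega⟩ from rfl, layer_left,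
        show (⟨(b : ℕ), show (b : ℕ) < n + (n + n) by have := b.isLt; omega⟩ : Fin (n + (n + n))) =
          Fin.castAdd (n + n) ⟨(b : ℕ), b.isLt⟩ from rfl, embed_left]
  rw [show (⟨(n + (n + n)) + (n + (n + n)) + (b : ℕ), by have := b.isLt; omega⟩ :
        Fin (((n + (n + n)) + (n + (n + n))) + ((n + (n + n)) + (n + (n + n))))) =
      Fin.natAdd ((n + (n + n)) + (n + (n + n))) ⟨(b : ℕ), hb2⟩ from rfl, layer_right]
  simp only [cmfAttn, Matrix.of_apply, hSm, Matrix.smul_apply, smul_eq_mul, hsc, hent]
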